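/- Let p ≥ 2 and K > 0, let B be a real Banach space with modulus of uniform convexity η(ε) = K ε^p, let T be a nonexpansive linear operator on B, let x ∈ B with x ≠ 0, and let ε > 0. Set M = ⌈16‖x‖/ε⌉ and γ = (ε/8) · K · (ε/(8‖x‖))^{p−1}. Suppose N ≥ 1 and u ≥ 1 are natural numbers such that for every m with 1 ≤ m ≤ u one has ‖A_m x‖ ≥ ‖A_N x‖ − γ. Then for every pair of integers i, j with M·N ≤ i ≤ ⌊u/2⌋ and M·N ≤ j ≤ ⌊u/2⌋, one has ‖A_i x − A_j x‖ < ε. -/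

import Mathlib

open Finset

/-- The ergodic averages `A n x = (1/n) ∑_{i<n} Tⁱ x`. -/
noncomputable def ergAvg {B : Type*} [NormedAddCommGroup B] [Module ℝ B]
    (T : B →ₗ[ℝ] B) (n : ℕ) (x : B) : B :=
  (n : ℝ)⁻¹ • ∑ i ∈ Finset.range n, (T ^ i) x

section Aux

variable {B : Type*} [NormedAddCommGroup B] [NormedSpace ℝ B] {T : B →ₗ[ℝ] B}

lemma aux_pow_norm_le (hT : ∀ y : B, ‖T y‖ ≤ ‖y‖) (k : ℕ) :
    ∀ y : B, ‖(T ^ k) y‖ ≤ ‖y‖ := by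
  induction k with
  | zero => intro y; simp
  | succ n ih =>
      intro y
      rw [pow_succ, Module.End.mul_apply]
      exact le_trans (ih (T y)) (hT y)

lemma aux_avg_norm_le {c : ℕ} {f : ℕ → B} {C : ℝ} (hc : 1 ≤ c)
    (h : ∀ k ∈ Finset.range c, ‖f k‖ ≤ C) :
    ‖(c : ℝ)⁻¹ • ∑ k ∈ Finset.range c, f k‖ ≤ C := by
  have hc0 : (0:ℝ) < (c:ℝ) := by exact_mod_cast hc
  have h1 : ‖∑ k ∈ Finset.range c, f k‖ ≤ (c : ℝ) * C := by
    calc ‖∑ k ∈ Finset.range c, f k‖ ≤ ∑ k ∈ Finset.range c, ‖f k‖ := norm_sum_le _ _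
      _ ≤ ∑ _k ∈ Finset.range c, C := Finset.sum_le_sum h
      _ = (c : ℝ) * C := by rw [Finset.sum_const, Finset.card_range, nsmul_eq_mul]
  rw [norm_smul, Real.norm_eq_abs, abs_of_nonneg (by positivity)]
  calc (c:ℝ)⁻¹ * ‖∑ k ∈ Finset.range c, f k‖ ≤ (c:ℝ)⁻¹ * ((c:ℝ) * C) :=
        mul_le_mul_of_nonneg_left h1 (by positivity)
    _ = C := by field_simp

lemma aux_sum_norm_le (hT : ∀ y : B, ‖T y‖ ≤ ‖y‖) (n : ℕ) (y : B) :
    ‖∑ t ∈ Finset.range n, (T ^ t) y‖ ≤ (n : ℝ) * ‖y‖ := by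
  calc ‖∑ t ∈ Finset.range n, (T ^ t) y‖ ≤ ∑ t ∈ Finset.range n, ‖(T ^ t) y‖ :=
        norm_sum_le _ _
    _ ≤ ∑ _t ∈ Finset.range n, ‖y‖ := Finset.sum_le_sum fun t _ => aux_pow_norm_le hT t y
    _ = (n : ℝ) * ‖y‖ := by rw [Finset.sum_const, Finset.card_range, nsmul_eq_mul]

lemma aux_sum_range_add {M : Type*} [AddCommMonoid M] (f : ℕ → M) (n m : ℕ) :
    ∑ k ∈ Finset.range (n + m), f k
      = ∑ k ∈ Finset.range n, f k + ∑ k ∈ Finset.range m, f (n + k) := by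
  induction m with
  | zero => simp
  | succ m ih =>
      rw [show n + (m + 1) = (n + m) + 1 from by omega, Finset.sum_range_succ, ih,
        Finset.sum_range_succ, add_assoc]

lemma aux_sum_split (T : B →ₗ[ℝ] B) (x : B) (n m : ℕ) :
    ∑ t ∈ Finset.range (n + m), (T ^ t) x
      = ∑ t ∈ Finset.range n, (T ^ t) x + (T ^ n) (∑ t ∈ Finset.range m, (T ^ t) x) := by
  induction m with
  | zero => simp
  | succ m ih =>
      rw [show n + (m + 1) = (n + m) + 1 from by omega, Finset.sum_range_succ, ih,
        Finset.sum_range_succ, map_add, ← add_assoc]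
      congr 1
      rw [pow_add, Module.End.mul_apply]

lemma aux_avg_block (T : B →ₗ[ℝ] B) (x : B) (N c : ℕ) :
    ∑ k ∈ Finset.range c, (T ^ (k * N)) (ergAvg T N x)
      = (N : ℝ)⁻¹ • ∑ t ∈ Finset.range (c * N), (T ^ t) x := by
  induction c with
  | zero => simp
  | succ c ih =>
      rw [Finset.sum_range_succ, ih, show (c + 1) * N = c * N + N from by ring,
        aux_sum_split T x (c * N) N, smul_add]
      congr 1
      simp only [ergAvg, map_smul]

lemma aux_ergAvg_mul (T : B →ₗ[ℝ] B) (x : B) (m N : ℕ) :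
    ergAvg T (m * N) x
      = (m : ℝ)⁻¹ • ∑ k ∈ Finset.range m, (T ^ (k * N)) (ergAvg T N x) := by
  rw [aux_avg_block, smul_smul]
  simp only [ergAvg]
  congr 1
  push_cast
  rw [mul_inv]

lemma aux_mid (T : B →ₗ[ℝ] B) (x : B) (N c : ℕ) :
    ergAvg T (2 * c * N) x
      = (c : ℝ)⁻¹ • ∑ k ∈ Finset.range c,
          (T ^ (k * N)) ((1/2 : ℝ) • (ergAvg T N x + (T ^ (c * N)) (ergAvg T N x))) := by
  rw [aux_ergAvg_mul T x (2 * c) N]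
  have h1 : ∀ k : ℕ, (T ^ (k * N)) ((1/2 : ℝ) • (ergAvg T N x + (T ^ (c * N)) (ergAvg T N x)))
      = (1/2 : ℝ) • ((T ^ (k * N)) (ergAvg T N x) + (T ^ ((c + k) * N)) (ergAvg T N x)) := by
    intro k
    rw [show (c + k) * N = k * N + c * N from by ring, pow_add, Module.End.mul_apply,
      map_smul, map_add]
  simp only [h1]
  rw [← Finset.smul_sum, Finset.sum_add_distrib, smul_smul, two_mul,
    aux_sum_range_add (fun k => (T ^ (k * N)) (ergAvg T N x)) c c]
  congr 1
  push_cast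
  by_cases hc0 : (c:ℝ) = 0
  · rw [hc0]; norm_num
  · field_simp
    ring

lemma aux_gamma_lt {p K b a ε : ℝ} (hp : 2 ≤ p) (hK : 0 < K) (hb : 0 < b)
    (ha : 0 < a) (hab : a ≤ b) (hε : 0 < ε) :
    ε/8 * (K * (ε/(8*b)) ^ (p-1)) < a * (K * (ε/(4*a)) ^ p) := by
  have h8b : (0:ℝ) < ε/(8*b) := by positivity
  have h8a : (0:ℝ) < ε/(8*a) := by positivity
  have hbp : (0:ℝ) < b ^ p := Real.rpow_pos_of_pos hb p
  have hap : (0:ℝ) < a ^ p := Real.rpow_pos_of_pos ha p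
  have hL : ε/8 * (K * (ε/(8*b)) ^ (p-1)) = b * (K * (ε/(8*b)) ^ p) := by
    have h2 := Real.rpow_add_one h8b.ne' (p-1)
    rw [sub_add_cancel] at h2
    rw [h2]
    field_simp
  have hbform : b * (K * (ε/(8*b)) ^ p) = K * ((ε/8) ^ p * (b ^ (1-p))) := by
    rw [show ε/(8*b) = (ε/8)/b from by ring, Real.div_rpow (by positivity) hb.le,
      Real.rpow_sub hb, Real.rpow_one]
    field_simp
  have haform : a * (K * (ε/(8*a)) ^ p) = K * ((ε/8) ^ p * (a ^ (1-p))) := by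
    rw [show ε/(8*a) = (ε/8)/a from by ring, Real.div_rpow (by positivity) ha.le,
      Real.rpow_sub ha, Real.rpow_one]
    field_simp
  have hexp : b ^ (1-p) ≤ a ^ (1-p) := by
    have h1 : a ^ (p-1) ≤ b ^ (p-1) := Real.rpow_le_rpow ha.le hab (by linarith)
    have hap1 : (0:ℝ) < a ^ (p-1) := Real.rpow_pos_of_pos ha _
    have h2 : (b ^ (p-1))⁻¹ ≤ (a ^ (p-1))⁻¹ := inv_anti₀ hap1 h1
    rw [show (1:ℝ) - p = -(p-1) from by ring, Real.rpow_neg ha.le, Real.rpow_neg hb.le]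
    exact h2
  have hmono : b * (K * (ε/(8*b)) ^ p) ≤ a * (K * (ε/(8*a)) ^ p) := by
    rw [hbform, haform]
    have h80 : (0:ℝ) ≤ (ε/8) ^ p := (Real.rpow_pos_of_pos (by positivity) p).le
    exact mul_le_mul_of_nonneg_left (mul_le_mul_of_nonneg_left hexp h80) hK.le
  have hX : (0:ℝ) < (ε/(8*a)) ^ p := Real.rpow_pos_of_pos h8a p
  have hdouble : 4 * (a * (K * (ε/(8*a)) ^ p)) ≤ a * (K * (ε/(4*a)) ^ p) := by
    rw [show ε/(4*a) = 2*(ε/(8*a)) from by ring,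
      Real.mul_rpow (by norm_num : (0:ℝ) ≤ 2) h8a.le]
    have h22 : (2:ℝ) ^ (2:ℝ) = 4 := by
      rw [show (2:ℝ) = ((2:ℕ):ℝ) from by norm_num, Real.rpow_natCast]
      norm_num
    have h4 : (4:ℝ) ≤ 2 ^ p := by
      rw [← h22]
      exact Real.rpow_le_rpow_of_exponent_le one_le_two hp
    have hq : (0:ℝ) ≤ a * (K * (ε/(8*a)) ^ p) :=
      mul_nonneg ha.le (mul_nonneg hK.le hX.le)
    nlinarith [mul_le_mul_of_nonneg_left h4 hq]
  have hpos : (0:ℝ) < a * (K * (ε/(8*a)) ^ p) := mul_pos ha (mul_pos hK hX)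
  rw [hL]
  linarith

lemma aux_uc {p K ε b : ℝ} (hp : 2 ≤ p) (hK : 0 < K)
    (huc : ∀ ε' ∈ Set.Ioc (0 : ℝ) 2, ∀ x y : B, ‖x‖ ≤ 1 → ‖y‖ ≤ 1 → ε' ≤ ‖x - y‖ →
      ‖(1 / 2 : ℝ) • (x + y)‖ ≤ 1 - K * ε' ^ p)
    (hε : 0 < ε) (hb : 0 < b)
    {v w : B} (hw : ‖w‖ ≤ ‖v‖) (hvb : ‖v‖ ≤ b)
    (hlow : ‖v‖ - ε/8 * (K * (ε/(8*b)) ^ (p-1)) ≤ ‖(1/2 : ℝ) • (v + w)‖) :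
    ‖v - w‖ < ε/4 := by
  by_contra hcon
  push_neg at hcon
  have hd2a : ‖v - w‖ ≤ 2 * ‖v‖ := by
    calc ‖v - w‖ ≤ ‖v‖ + ‖w‖ := norm_sub_le _ _
      _ ≤ 2 * ‖v‖ := by linarith
  have hapos : (0:ℝ) < ‖v‖ := by linarith
  have hθ2 : ε/(4*‖v‖) ≤ 2 := by
    rw [div_le_iff₀ (by positivity)]; linarith
  have hx1 : ‖(‖v‖)⁻¹ • v‖ ≤ 1 := by
    rw [norm_smul, Real.norm_eq_abs, abs_of_nonneg (by positivity),
      inv_mul_cancel₀ hapos.ne']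
  have hy1 : ‖(‖v‖)⁻¹ • w‖ ≤ 1 := by
    rw [norm_smul, Real.norm_eq_abs, abs_of_nonneg (by positivity)]
    have h := mul_le_mul_of_nonneg_left hw (inv_nonneg.mpr hapos.le)
    rwa [inv_mul_cancel₀ hapos.ne'] at h
  have hdist : ε/(4*‖v‖) ≤ ‖(‖v‖)⁻¹ • v - (‖v‖)⁻¹ • w‖ := by
    rw [← smul_sub, norm_smul, Real.norm_eq_abs, abs_of_nonneg (by positivity),
      show ε/(4*‖v‖) = (‖v‖)⁻¹ * (ε/4) from by ring]
    exact mul_le_mul_of_nonneg_left hcon (by positivity)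
  have hucc := huc (ε/(4*‖v‖)) ⟨by positivity, hθ2⟩ _ _ hx1 hy1 hdist
  have hmid : ‖(1/2 : ℝ) • (v + w)‖ ≤ ‖v‖ * (1 - K * (ε/(4*‖v‖)) ^ p) := by
    have hvw : (1/2 : ℝ) • (v + w)
        = ‖v‖ • ((1/2 : ℝ) • ((‖v‖)⁻¹ • v + (‖v‖)⁻¹ • w)) := by
      rw [← smul_add, smul_comm, smul_inv_smul₀ hapos.ne']
    rw [hvw, norm_smul, Real.norm_eq_abs, abs_of_nonneg hapos.le]
    exact mul_le_mul_of_nonneg_left hucc hapos.le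
  have hkey := aux_gamma_lt hp hK hb hapos hvb hε
  nlinarith [hmid, hlow, hkey]

end Aux

/-- Kohlenbach–Leuştean lemma: with `M = ⌈16‖x‖/ε⌉` and `γ = (ε/8)·K·(ε/(8‖x‖))^{p-1}`, if
`‖A_m x‖ ≥ ‖A_N x‖ − γ` for every `1 ≤ m ≤ u`, then `‖A_i x − A_j x‖ < ε` for all
`i, j ∈ [M·N, ⌊u/2⌋]`. -/
theorem stmt11 (p K : ℝ) (hp : 2 ≤ p) (hK : 0 < K)
    {B : Type*} [NormedAddCommGroup B] [NormedSpace ℝ B] [CompleteSpace B]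
    (huc : ∀ ε ∈ Set.Ioc (0 : ℝ) 2, ∀ x y : B, ‖x‖ ≤ 1 → ‖y‖ ≤ 1 → ε ≤ ‖x - y‖ →
      ‖(1 / 2 : ℝ) • (x + y)‖ ≤ 1 - K * ε ^ p)
    (T : B →ₗ[ℝ] B) (hT : ∀ y : B, ‖T y‖ ≤ ‖y‖)
    (x : B) (hx : x ≠ 0) (ε : ℝ) (hε : 0 < ε)
    (N u : ℕ) (hN : 1 ≤ N) (hu : 1 ≤ u)
    (hmin : ∀ m : ℕ, 1 ≤ m → m ≤ u →
      ‖ergAvg T N x‖ - ε / 8 * (K * (ε / (8 * ‖x‖)) ^ (p - 1)) ≤ ‖ergAvg T m x‖) :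
    ∀ i j : ℕ, ⌈16 * ‖x‖ / ε⌉₊ * N ≤ i → i ≤ u / 2 → ⌈16 * ‖x‖ / ε⌉₊ * N ≤ j → j ≤ u / 2 →
      ‖ergAvg T i x - ergAvg T j x‖ < ε := by
  intro i j hi hiu hj hju
  have hb : (0:ℝ) < ‖x‖ := norm_pos_iff.mpr hx
  have ha_b : ‖ergAvg T N x‖ ≤ ‖x‖ := by
    simp only [ergAvg]
    exact aux_avg_norm_le hN fun k _ => aux_pow_norm_le hT k x
  -- Step 1: near-invariance of A_N x under T^{cN}
  have step1 : ∀ c : ℕ, 1 ≤ c → 2 * c * N ≤ u →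
      ‖ergAvg T N x - (T ^ (c * N)) (ergAvg T N x)‖ < ε/4 := by
    intro c hc hcu
    have h1cN : 1 ≤ 2 * c * N := by
      have := Nat.mul_le_mul (show 1 ≤ 2 * c by omega) hN
      simpa using this
    have hlow0 := hmin (2 * c * N) h1cN hcu
    have h2 : ‖ergAvg T (2 * c * N) x‖
        ≤ ‖(1/2 : ℝ) • (ergAvg T N x + (T ^ (c * N)) (ergAvg T N x))‖ := by
      rw [aux_mid T x N c]
      exact aux_avg_norm_le hc fun k _ => aux_pow_norm_le hT _ _
    exact aux_uc hp hK huc hε hb (aux_pow_norm_le hT _ _) ha_b (by linarith)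
  -- Step 2: A_{lN} x is close to A_N x
  have step2 : ∀ l : ℕ, 1 ≤ l → 2 * l * N ≤ u →
      ‖ergAvg T (l * N) x - ergAvg T N x‖ ≤ ε/4 := by
    intro l hl hlu
    have hl0 : (l:ℝ) ≠ 0 := by
      have : 0 < l := hl
      exact_mod_cast this.ne'
    have hrep : ergAvg T (l * N) x - ergAvg T N x
        = (l : ℝ)⁻¹ • ∑ k ∈ Finset.range l,
            ((T ^ (k * N)) (ergAvg T N x) - ergAvg T N x) := by
      rw [aux_ergAvg_mul T x l N, Finset.sum_sub_distrib, smul_sub]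
      congr 1
      rw [Finset.sum_const, Finset.card_range, ← Nat.cast_smul_eq_nsmul ℝ, smul_smul,
        inv_mul_cancel₀ hl0, one_smul]
    rw [hrep]
    apply aux_avg_norm_le hl
    intro k hk
    rcases Nat.eq_zero_or_pos k with h0 | hpos
    · subst h0
      simp only [Nat.zero_mul, pow_zero, Module.End.one_apply, sub_self, norm_zero]
      linarith
    · have hku : 2 * k * N ≤ u := by
        refine le_trans ?_ hlu
        apply Nat.mul_le_mul_right
        have : k < l := Finset.mem_range.mp hk
        omega
      rw [norm_sub_rev]
      exact (step1 k hpos hku).le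
  -- Step 3: A_n x is close to A_{(n/N)·N} x for n ≥ M·N
  have step3 : ∀ n : ℕ, ⌈16 * ‖x‖ / ε⌉₊ * N ≤ n →
      ‖ergAvg T n x - ergAvg T (n / N * N) x‖ ≤ ε/8 := by
    intro n hn
    have hN0 : 0 < N := hN
    have hM0 : 0 < ⌈16 * ‖x‖ / ε⌉₊ := Nat.ceil_pos.mpr (by positivity)
    have hNn : N ≤ n := le_trans (Nat.le_mul_of_pos_left N hM0) hn
    have hl1 : 1 ≤ n / N := (Nat.one_le_div_iff hN0).mpr hNn
    have hALn : n / N * N ≤ n := Nat.div_mul_le_self n N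
    have hA0 : 0 < n / N * N := Nat.mul_pos hl1 hN0
    have hrlt : n % N < N := Nat.mod_lt _ hN0
    have heq : n / N * N + n % N = n := by
      rw [Nat.mul_comm]
      exact Nat.div_add_mod n N
    have hsplit : ∑ t ∈ Finset.range n, (T ^ t) x
        = ∑ t ∈ Finset.range (n / N * N), (T ^ t) x
          + (T ^ (n / N * N)) (∑ t ∈ Finset.range (n % N), (T ^ t) x) := by
      conv_lhs => rw [← heq]
      exact aux_sum_split T x _ _
    have hnR : (0:ℝ) < (n:ℝ) := by
      have : 0 < n := lt_of_lt_of_le hA0 hALn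
      exact_mod_cast this
    have hAR : (0:ℝ) < ((n / N * N : ℕ):ℝ) := by exact_mod_cast hA0
    have hAleR : ((n / N * N : ℕ):ℝ) ≤ (n:ℝ) := by exact_mod_cast hALn
    have heqR : ((n / N * N : ℕ):ℝ) + ((n % N : ℕ):ℝ) = (n:ℝ) := by exact_mod_cast heq
    have hdiff : ergAvg T n x - ergAvg T (n / N * N) x
        = ((n:ℝ)⁻¹ - ((n / N * N : ℕ):ℝ)⁻¹) • (∑ t ∈ Finset.range (n / N * N), (T ^ t) x)
          + (n:ℝ)⁻¹ • ((T ^ (n / N * N)) (∑ t ∈ Finset.range (n % N), (T ^ t) x)) := by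
      simp only [ergAvg]
      rw [hsplit, smul_add, sub_smul]
      abel
    have h1 : ‖∑ t ∈ Finset.range (n / N * N), (T ^ t) x‖ ≤ ((n / N * N : ℕ):ℝ) * ‖x‖ :=
      aux_sum_norm_le hT _ x
    have h2 : ‖(T ^ (n / N * N)) (∑ t ∈ Finset.range (n % N), (T ^ t) x)‖
        ≤ ((n % N : ℕ):ℝ) * ‖x‖ :=
      le_trans (aux_pow_norm_le hT _ _) (aux_sum_norm_le hT _ x)
    have hinv : (n:ℝ)⁻¹ ≤ ((n / N * N : ℕ):ℝ)⁻¹ := inv_anti₀ hAR hAleR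
    have habs : |(n:ℝ)⁻¹ - ((n / N * N : ℕ):ℝ)⁻¹|
        = ((n % N : ℕ):ℝ) / (((n / N * N : ℕ):ℝ) * (n:ℝ)) := by
      rw [abs_sub_comm, abs_of_nonneg (by linarith), eq_div_iff (by positivity)]
      have h' : ((n / N : ℕ):ℝ) * ((N : ℕ):ℝ) + ((n % N : ℕ):ℝ) = (n:ℝ) := by
        exact_mod_cast heq
      field_simp
      push_cast
      linarith [h']
    have hb1 : ‖((n:ℝ)⁻¹ - ((n / N * N : ℕ):ℝ)⁻¹)
          • (∑ t ∈ Finset.range (n / N * N), (T ^ t) x)‖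
        ≤ ((n % N : ℕ):ℝ) / (((n / N * N : ℕ):ℝ) * (n:ℝ)) * (((n / N * N : ℕ):ℝ) * ‖x‖) := by
      rw [norm_smul, Real.norm_eq_abs, habs]
      exact mul_le_mul_of_nonneg_left h1 (by positivity)
    have hb2 : ‖(n:ℝ)⁻¹ • ((T ^ (n / N * N)) (∑ t ∈ Finset.range (n % N), (T ^ t) x))‖
        ≤ (n:ℝ)⁻¹ * (((n % N : ℕ):ℝ) * ‖x‖) := by
      rw [norm_smul, Real.norm_eq_abs, abs_of_nonneg (by positivity)]
      exact mul_le_mul_of_nonneg_left h2 (by positivity)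
    rw [hdiff]
    refine le_trans (le_trans (norm_add_le _ _) (add_le_add hb1 hb2)) ?_
    have e1 : ((n % N : ℕ):ℝ) / (((n / N * N : ℕ):ℝ) * (n:ℝ)) * (((n / N * N : ℕ):ℝ) * ‖x‖)
        = ((n % N : ℕ):ℝ) * ‖x‖ / (n:ℝ) := by
      field_simp
    have e2 : (n:ℝ)⁻¹ * (((n % N : ℕ):ℝ) * ‖x‖) = ((n % N : ℕ):ℝ) * ‖x‖ / (n:ℝ) := by
      ring
    rw [e1, e2, ← add_div, div_le_iff₀ hnR]
    have hrR : ((n % N : ℕ):ℝ) ≤ (N:ℝ) := by exact_mod_cast hrlt.le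
    have hcast : ((⌈16 * ‖x‖ / ε⌉₊ : ℕ):ℝ) * (N:ℝ) ≤ (n:ℝ) := by exact_mod_cast hn
    have hceil : 16 * ‖x‖ / ε ≤ ((⌈16 * ‖x‖ / ε⌉₊ : ℕ):ℝ) := Nat.le_ceil _
    have h0 : 16 * ‖x‖ / ε * (N:ℝ) ≤ (n:ℝ) :=
      le_trans (mul_le_mul_of_nonneg_right hceil (by positivity)) hcast
    have h16 : 16 * ‖x‖ * (N:ℝ) ≤ ε * (n:ℝ) := by
      have h1' := mul_le_mul_of_nonneg_left h0 hε.le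
      have h2' : ε * (16 * ‖x‖ / ε * (N:ℝ)) = 16 * ‖x‖ * (N:ℝ) := by
        field_simp
      linarith
    have hbx : (0:ℝ) ≤ ‖x‖ := norm_nonneg x
    nlinarith [mul_le_mul_of_nonneg_right hrR hbx]
  -- Combine: every A_n x with n in range is close to A_N x
  have key : ∀ n : ℕ, ⌈16 * ‖x‖ / ε⌉₊ * N ≤ n → n ≤ u / 2 →
      ‖ergAvg T n x - ergAvg T N x‖ ≤ ε/8 + ε/4 := by
    intro n h1 h2
    have hM0 : 0 < ⌈16 * ‖x‖ / ε⌉₊ := Nat.ceil_pos.mpr (by positivity)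
    have hNn : N ≤ n := le_trans (Nat.le_mul_of_pos_left N hM0) h1
    have hl1 : 1 ≤ n / N := (Nat.one_le_div_iff hN).mpr hNn
    have h2l : 2 * (n / N) * N ≤ u := by
      have h3 : n / N * N ≤ n := Nat.div_mul_le_self n N
      have h4 : 2 * n ≤ u := by omega
      calc 2 * (n / N) * N = 2 * (n / N * N) := by rw [Nat.mul_assoc]
        _ ≤ 2 * n := Nat.mul_le_mul_left 2 h3
        _ ≤ u := h4
    have hs3 := step3 n h1
    have hs2 := step2 (n / N) hl1 h2l
    calc ‖ergAvg T n x - ergAvg T N x‖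
        ≤ ‖ergAvg T n x - ergAvg T (n / N * N) x‖
          + ‖ergAvg T (n / N * N) x - ergAvg T N x‖ :=
          norm_sub_le_norm_sub_add_norm_sub _ _ _
      _ ≤ ε/8 + ε/4 := add_le_add hs3 hs2
  have h1 := key i hi hiu
  have h2 := key j hj hju
  have htri : ‖ergAvg T i x - ergAvg T j x‖
      ≤ ‖ergAvg T i x - ergAvg T N x‖ + ‖ergAvg T N x - ergAvg T j x‖ :=
    norm_sub_le_norm_sub_add_norm_sub _ _ _
  have h2' : ‖ergAvg T N x - ergAvg T j x‖ = ‖ergAvg T j x - ergAvg T N x‖ :=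
    norm_sub_rev _ _
  linarith
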